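/- arXiv:1906.09231 — 3 statements merged into one kernel-verified Lean document; each statement's English description precedes it below -/
import Mathlib

section
/- Let X be a zero-mean σ-subgaussian random variable, i.e., E[X] = 0 and E[exp(λX)] ≤ exp(λ²σ²/2) for all λ ∈ ℝ. Then for every λ ∈ [0,1), E[exp(λX²/(2σ²))] ≤ 1/√(1 − λ). -/
open MeasureTheory Real

lemma gauss_lintegral (b : ℝ) (hb : 0 < b) :
    ∫⁻ s : ℝ, ENNReal.ofReal (Real.exp (-b * s ^ 2)) = ENNReal.ofReal (Real.sqrt (π / b)) := by
  rw [← ofReal_integral_eq_lintegral_ofReal (integrable_exp_neg_mul_sq hb)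
      (Filter.Eventually.of_forall fun x => (Real.exp_pos _).le), integral_gaussian]

lemma gauss_lintegral_shift (b c : ℝ) (hb : 0 < b) :
    ∫⁻ s : ℝ, ENNReal.ofReal (Real.exp (-b * (s - c) ^ 2)) = ENNReal.ofReal (Real.sqrt (π / b)) := by
  have := lintegral_add_right_eq_self (μ := (volume : Measure ℝ))
    (fun s : ℝ => ENNReal.ofReal (Real.exp (-b * s ^ 2))) (-c)
  simp only [← sub_eq_add_neg] at this
  rw [this, gauss_lintegral b hb]

/-- If `X` is a zero-mean `σ`-subgaussian random variable, then for every
`λ ∈ [0,1)`, `E[exp (λ X² / (2σ²))] ≤ 1/√(1-λ)`. -/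
theorem subgaussian_square_mgf {Ω : Type*} [MeasurableSpace Ω]
    (P : Measure Ω) [IsProbabilityMeasure P]
    (X : Ω → ℝ) (hX : Measurable X) (σ : ℝ) (hσ : 0 < σ)
    (hint : Integrable X P) (hmean : ∫ ω, X ω ∂P = 0)
    (hsub : ∀ l : ℝ,
      ∫⁻ ω, ENNReal.ofReal (Real.exp (l * X ω)) ∂P ≤
        ENNReal.ofReal (Real.exp (l ^ 2 * σ ^ 2 / 2))) :
    ∀ l : ℝ, 0 ≤ l → l < 1 →
      ∫⁻ ω, ENNReal.ofReal (Real.exp (l * (X ω) ^ 2 / (2 * σ ^ 2))) ∂P ≤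
        ENNReal.ofReal (1 / Real.sqrt (1 - l)) := by
  intro l hl0 hl1
  rcases eq_or_lt_of_le hl0 with h0 | hl0
  · subst h0
    simp only [zero_mul, zero_div, Real.exp_zero, ENNReal.ofReal_one, lintegral_one,
      measure_univ, mul_one, sub_zero, Real.sqrt_one]
    norm_num
  -- setup
  set k : ℝ := l / σ ^ 2 with hk_def
  have hσ2 : (0:ℝ) < σ ^ 2 := by positivity
  have hk : 0 < k := div_pos hl0 hσ2
  have h1l : (0:ℝ) < 1 - l := by linarith
  set b : ℝ := 1 / (2 * k) - σ ^ 2 / 2 with hb_def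
  have hbe : b = σ ^ 2 * (1 - l) / (2 * l) := by
    rw [hb_def, hk_def]; field_simp
  have hb : 0 < b := by rw [hbe]; positivity
  set C : ENNReal := ENNReal.ofReal (Real.sqrt (2 * π * k)) with hC_def
  have hC0 : C ≠ 0 := by
    rw [hC_def]
    simp only [ne_eq, ENNReal.ofReal_eq_zero, not_le]
    positivity
  have hCt : C ≠ ⊤ := ENNReal.ofReal_ne_top
  -- pointwise Gaussian representation
  have key : ∀ x : ℝ,
      ∫⁻ s : ℝ, ENNReal.ofReal (Real.exp (s * x - s ^ 2 / (2 * k))) =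
        ENNReal.ofReal (Real.exp (l * x ^ 2 / (2 * σ ^ 2))) * C := by
    intro x
    have hrw : ∀ s : ℝ, Real.exp (s * x - s ^ 2 / (2 * k)) =
        Real.exp (l * x ^ 2 / (2 * σ ^ 2)) * Real.exp (-(1 / (2 * k)) * (s - k * x) ^ 2) := by
      intro s
      rw [← Real.exp_add]
      congr 1
      rw [hk_def]
      field_simp
      ring
    simp_rw [hrw, ENNReal.ofReal_mul (Real.exp_pos _).le]
    rw [lintegral_const_mul' _ _ ENNReal.ofReal_ne_top,
      gauss_lintegral_shift (1 / (2 * k)) (k * x) (by positivity)]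
    rw [hC_def]
    congr 2
    rw [one_div, div_inv_eq_mul]
    ring
  have hmeas : Measurable fun p : Ω × ℝ =>
      ENNReal.ofReal (Real.exp (p.2 * X p.1 - p.2 ^ 2 / (2 * k))) := by
    apply Measurable.ennreal_ofReal
    exact (Real.measurable_exp.comp
      (((measurable_snd.mul (hX.comp measurable_fst))).sub
        ((measurable_snd.pow_const 2).div_const _)))
  have main :
      (∫⁻ ω, ENNReal.ofReal (Real.exp (l * (X ω) ^ 2 / (2 * σ ^ 2))) ∂P) * C ≤
        ENNReal.ofReal (Real.sqrt (π / b)) := by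
    calc (∫⁻ ω, ENNReal.ofReal (Real.exp (l * (X ω) ^ 2 / (2 * σ ^ 2))) ∂P) * C
        = ∫⁻ ω, ENNReal.ofReal (Real.exp (l * (X ω) ^ 2 / (2 * σ ^ 2))) * C ∂P :=
          (lintegral_mul_const' C _ hCt).symm
      _ = ∫⁻ ω, (∫⁻ s : ℝ, ENNReal.ofReal (Real.exp (s * X ω - s ^ 2 / (2 * k)))) ∂P :=
          lintegral_congr fun ω => (key (X ω)).symm
      _ = ∫⁻ s : ℝ, ∫⁻ ω, ENNReal.ofReal (Real.exp (s * X ω - s ^ 2 / (2 * k))) ∂P :=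
          lintegral_lintegral_swap hmeas.aemeasurable
      _ ≤ ∫⁻ s : ℝ, ENNReal.ofReal (Real.exp (-b * s ^ 2)) := by
          apply lintegral_mono
          intro s
          have hsp : ∀ ω, Real.exp (s * X ω - s ^ 2 / (2 * k)) =
              Real.exp (s * X ω) * Real.exp (-(s ^ 2 / (2 * k))) := by
            intro ω; rw [← Real.exp_add]; ring_nf
          simp_rw [hsp, ENNReal.ofReal_mul (Real.exp_pos _).le]
          rw [lintegral_mul_const' _ _ ENNReal.ofReal_ne_top]
          calc _ ≤ ENNReal.ofReal (Real.exp (s ^ 2 * σ ^ 2 / 2)) *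
                ENNReal.ofReal (Real.exp (-(s ^ 2 / (2 * k)))) :=
                mul_le_mul_left (hsub s) _
            _ = ENNReal.ofReal (Real.exp (-b * s ^ 2)) := by
                rw [← ENNReal.ofReal_mul (Real.exp_pos _).le, ← Real.exp_add]
                congr 1
                rw [hb_def]
                ring
      _ = ENNReal.ofReal (Real.sqrt (π / b)) := gauss_lintegral b hb
  have hfin : Real.sqrt (π / b) = (1 / Real.sqrt (1 - l)) * Real.sqrt (2 * π * k) := by
    rw [one_div, ← Real.sqrt_inv, ← Real.sqrt_mul (by positivity)]
    congr 1
    rw [hbe, hk_def]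
    field_simp
  rw [hfin, ENNReal.ofReal_mul (by positivity), ← hC_def] at main
  exact (ENNReal.mul_le_mul_iff_left hC0 hCt).mp main
end

section
/- Let Q be a probability measure on ℝ, let m ∈ ℝ, and suppose that under Q the identity random variable centered at m is σ-subgaussian, i.e., ∫ exp(λ(x − m)) dQ(x) ≤ exp(λ²σ²/2) for all λ ∈ ℝ. Then for every probability measure P on ℝ with P ≪ Q and every λ ∈ [0,1): D_KL(P ‖ Q) ≥ (λ/(2σ²))·∫ (x − m)² dP(x) − ln(1/√(1 − λ)). -/
open MeasureTheory Real Classical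

/-- The Kullback–Leibler divergence `D_KL(P ‖ Q)`, valued in `EReal`: it equals
`∫ log (dP/dQ) dP` when `P ≪ Q` and the log-likelihood ratio is `P`-integrable,
and `⊤` otherwise. -/
noncomputable def klDiv {α : Type*} [MeasurableSpace α] (P Q : Measure α) : EReal :=
  if P ≪ Q ∧ Integrable (fun x => Real.log (P.rnDeriv Q x).toReal) P then
    ((∫ x, Real.log (P.rnDeriv Q x).toReal ∂P : ℝ) : EReal)
  else ⊤

lemma aux_sub_one_le_mul_log {t : ℝ} (ht : 0 ≤ t) : t - 1 ≤ t * Real.log t := by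
  rcases eq_or_lt_of_le ht with h | h
  · simp [← h]
  · have h1 := Real.log_le_sub_one_of_pos (inv_pos.mpr h)
    rw [Real.log_inv] at h1
    have h2 := mul_le_mul_of_nonneg_left h1 h.le
    rw [mul_sub, mul_inv_cancel₀ h.ne', mul_neg, mul_one] at h2
    linarith

lemma aux_gibbs {α : Type*} [MeasurableSpace α] (P ν : Measure α) [IsProbabilityMeasure P]
    [IsProbabilityMeasure ν] (hPν : P ≪ ν)
    (hL : Integrable (fun x => Real.log (P.rnDeriv ν x).toReal) P) :
    0 ≤ ∫ x, Real.log (P.rnDeriv ν x).toReal ∂P := by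
  set g : α → ℝ := fun x => (P.rnDeriv ν x).toReal with hg
  have h1 : ∫ x, Real.log (g x) ∂P = ∫ x, g x * Real.log (g x) ∂ν := by
    rw [← integral_rnDeriv_smul hPν (f := fun x => Real.log (g x))]
    simp [smul_eq_mul]; rfl
  have hint : Integrable (fun x => g x * Real.log (g x)) ν := by
    have := (integrable_rnDeriv_smul_iff hPν
      (f := fun x => Real.log (g x))).mpr hL
    simpa [smul_eq_mul] using this
  have hgint : Integrable g ν := Measure.integrable_toReal_rnDeriv
  have h2 : ∫ x, g x ∂ν = 1 := by
    rw [hg, Measure.integral_toReal_rnDeriv hPν]; simp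
  have h3 : ∫ x, (g x - 1) ∂ν ≤ ∫ x, g x * Real.log (g x) ∂ν :=
    integral_mono (hgint.sub (integrable_const 1)) hint
      (fun x => aux_sub_one_le_mul_log ENNReal.toReal_nonneg)
  rw [integral_sub hgint (integrable_const 1), h2, integral_const] at h3
  simp only [measure_univ, probReal_univ, ENNReal.toReal_one, smul_eq_mul, one_mul, sub_self] at h3
  rw [h1]; exact h3
lemma aux_dv {Q P : Measure ℝ} [IsProbabilityMeasure Q] [IsProbabilityMeasure P] (hPQ : P ≪ Q)
    {f : ℝ → ℝ} (hfQ : Integrable (fun x => Real.exp (f x)) Q) (hfP : Integrable f P) :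
    ((∫ x, f x ∂P - Real.log (∫ x, Real.exp (f x) ∂Q) : ℝ) : EReal) ≤ klDiv P Q := by
  rw [klDiv]
  split_ifs with h
  · obtain ⟨-, hL⟩ := h
    rw [EReal.coe_le_coe_iff]
    set Z := ∫ x, Real.exp (f x) ∂Q with hZ
    have hZpos : 0 < Z := integral_exp_pos hfQ
    have hν : IsProbabilityMeasure (Q.tilted f) := isProbabilityMeasure_tilted hfQ
    have hPν : P ≪ Q.tilted f := hPQ.trans (absolutelyContinuous_tilted hfQ)
    have hae : ∀ᵐ x ∂P, Real.log (P.rnDeriv (Q.tilted f) x).toReal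
        = Real.log (P.rnDeriv Q x).toReal - f x + Real.log Z := by
      filter_upwards [hPQ.ae_le (rnDeriv_tilted_right P Q hfQ),
        Measure.rnDeriv_pos hPQ, hPQ.ae_le (Measure.rnDeriv_lt_top P Q)] with x hx hpos hlt
      rw [hx]
      have hc : (0:ℝ) < Real.exp (- f x) * Z := mul_pos (Real.exp_pos _) hZpos
      have ht : (0:ℝ) < (P.rnDeriv Q x).toReal := ENNReal.toReal_pos hpos.ne' hlt.ne
      rw [ENNReal.toReal_mul, ENNReal.toReal_ofReal hc.le,
        Real.log_mul hc.ne' ht.ne', Real.log_mul (Real.exp_pos _).ne' hZpos.ne', Real.log_exp]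
      ring
    have h1 : Integrable (fun x => Real.log (P.rnDeriv Q x).toReal - f x) P := hL.sub hfP
    have h2 : Integrable (fun x => Real.log (P.rnDeriv Q x).toReal - f x + Real.log Z) P :=
      h1.add (integrable_const _)
    have hL' : Integrable (fun x => Real.log (P.rnDeriv (Q.tilted f) x).toReal) P :=
      h2.congr (by filter_upwards [hae] with x hx; exact hx.symm)
    have h0 := aux_gibbs P (Q.tilted f) hPν hL'
    have heq : ∫ x, Real.log (P.rnDeriv (Q.tilted f) x).toReal ∂P
        = ∫ x, Real.log (P.rnDeriv Q x).toReal ∂P - ∫ x, f x ∂P + Real.log Z := by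
      rw [integral_congr_ae hae, integral_add h1 (integrable_const _),
        integral_sub hL hfP, integral_const]
      simp [measure_univ]
    rw [heq] at h0
    linarith
  · exact le_top
lemma aux_gauss_bound {m σ : ℝ} (Q : Measure ℝ) [IsProbabilityMeasure Q] (hσ : σ ≠ 0)
    (hsub : ∀ lam : ℝ, ∫⁻ x, ENNReal.ofReal (Real.exp (lam * (x - m))) ∂Q ≤
        ENNReal.ofReal (Real.exp (lam ^ 2 * σ ^ 2 / 2)))
    {l : ℝ} (hl0 : 0 < l) (hl1 : l < 1) :
    ∫⁻ x, ENNReal.ofReal (Real.exp (l / (2 * σ ^ 2) * (x - m) ^ 2)) ∂Q ≤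
      ENNReal.ofReal (1 / Real.sqrt (1 - l)) := by
  have hσ2 : (0:ℝ) < σ ^ 2 := by positivity
  set a : ℝ := σ ^ 2 / (2 * l) with hadef
  set c : ℝ := l / (2 * σ ^ 2) with hcdef
  set b : ℝ := a * (1 - l) with hbdef
  have ha : 0 < a := by positivity
  have hc : 0 < c := by positivity
  have hb : 0 < b := by rw [hbdef]; nlinarith
  have hal : σ ^ 2 / 2 = a * l := by rw [hadef]; field_simp
  have hca : 4 * a * c = 1 := by rw [hadef, hcdef]; field_simp; ring
  -- key pointwise Gaussian identity
  have hkey : ∀ y : ℝ, ∫⁻ t, ENNReal.ofReal (Real.exp (-a * t ^ 2 + t * y)) ∂volume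
      = ENNReal.ofReal (Real.sqrt (π / a)) * ENNReal.ofReal (Real.exp (c * y ^ 2)) := by
    intro y
    have hpt : ∀ t : ℝ, -a * t ^ 2 + t * y = c * y ^ 2 + (-a * (t - y / (2 * a)) ^ 2) := by
      intro t
      have h4 : c = 1 / (4 * a) := by field_simp at hca ⊢; linarith
      rw [h4]; field_simp; ring
    have hInt1 : Integrable (fun t : ℝ => Real.exp (-a * (t - y / (2 * a)) ^ 2)) volume :=
      (integrable_exp_neg_mul_sq ha).comp_sub_right _
    have hInt : Integrable (fun t : ℝ => Real.exp (-a * t ^ 2 + t * y)) volume := by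
      refine (hInt1.const_mul (Real.exp (c * y ^ 2))).congr ?_
      refine ae_of_all _ fun t => ?_
      dsimp only
      rw [← Real.exp_add, ← hpt t]
    rw [← ofReal_integral_eq_lintegral_ofReal hInt (ae_of_all _ fun t => (Real.exp_pos _).le)]
    have hI : ∫ t : ℝ, Real.exp (-a * t ^ 2 + t * y)
        = Real.exp (c * y ^ 2) * Real.sqrt (π / a) := by
      calc ∫ t : ℝ, Real.exp (-a * t ^ 2 + t * y)
          = ∫ t : ℝ, Real.exp (c * y ^ 2) * Real.exp (-a * (t - y / (2 * a)) ^ 2) := by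
            refine integral_congr_ae (ae_of_all _ fun t => ?_)
            dsimp only
            rw [← Real.exp_add, ← hpt t]
        _ = Real.exp (c * y ^ 2) * ∫ t : ℝ, Real.exp (-a * (t - y / (2 * a)) ^ 2) :=
            integral_const_mul _ _
        _ = Real.exp (c * y ^ 2) * ∫ t : ℝ, Real.exp (-a * t ^ 2) := by
            rw [integral_sub_right_eq_self (fun t => Real.exp (-a * t ^ 2)) (y / (2 * a))]
        _ = Real.exp (c * y ^ 2) * Real.sqrt (π / a) := by rw [integral_gaussian]
    rw [hI, ENNReal.ofReal_mul (Real.exp_pos _).le, mul_comm]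
  set K := ENNReal.ofReal (Real.sqrt (π / a)) with hK
  have hK0 : K ≠ 0 := by
    simp only [hK, ne_eq, ENNReal.ofReal_eq_zero, not_le]
    positivity
  have hKtop : K ≠ ⊤ := ENNReal.ofReal_ne_top
  have hmeas : AEMeasurable (Function.uncurry fun x t : ℝ =>
      ENNReal.ofReal (Real.exp (-a * t ^ 2 + t * (x - m)))) (Q.prod volume) := by
    apply Measurable.aemeasurable
    apply Measurable.ennreal_ofReal
    apply Continuous.measurable
    fun_prop
  have hchain : K * ∫⁻ x, ENNReal.ofReal (Real.exp (c * (x - m) ^ 2)) ∂Q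
      ≤ K * ENNReal.ofReal (1 / Real.sqrt (1 - l)) := by
    calc K * ∫⁻ x, ENNReal.ofReal (Real.exp (c * (x - m) ^ 2)) ∂Q
        = ∫⁻ x, K * ENNReal.ofReal (Real.exp (c * (x - m) ^ 2)) ∂Q :=
          (lintegral_const_mul' _ _ hKtop).symm
      _ = ∫⁻ x, ∫⁻ t, ENNReal.ofReal (Real.exp (-a * t ^ 2 + t * (x - m))) ∂volume ∂Q :=
          lintegral_congr fun x => (hkey (x - m)).symm
      _ = ∫⁻ t, ∫⁻ x, ENNReal.ofReal (Real.exp (-a * t ^ 2 + t * (x - m))) ∂Q ∂volume :=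
          lintegral_lintegral_swap hmeas
      _ ≤ ∫⁻ t : ℝ, ENNReal.ofReal (Real.exp (-b * t ^ 2)) ∂volume := by
          refine lintegral_mono fun t => ?_
          calc ∫⁻ x, ENNReal.ofReal (Real.exp (-a * t ^ 2 + t * (x - m))) ∂Q
              = ∫⁻ x, ENNReal.ofReal (Real.exp (-a * t ^ 2)) *
                  ENNReal.ofReal (Real.exp (t * (x - m))) ∂Q := by
                refine lintegral_congr fun x => ?_
                rw [← ENNReal.ofReal_mul (Real.exp_pos _).le, ← Real.exp_add]
            _ = ENNReal.ofReal (Real.exp (-a * t ^ 2)) *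
                  ∫⁻ x, ENNReal.ofReal (Real.exp (t * (x - m))) ∂Q :=
                lintegral_const_mul' _ _ ENNReal.ofReal_ne_top
            _ ≤ ENNReal.ofReal (Real.exp (-a * t ^ 2)) *
                  ENNReal.ofReal (Real.exp (t ^ 2 * σ ^ 2 / 2)) :=
                mul_le_mul_right (hsub t) _
            _ = ENNReal.ofReal (Real.exp (-b * t ^ 2)) := by
                rw [← ENNReal.ofReal_mul (Real.exp_pos _).le, ← Real.exp_add]
                congr 1
                have : t ^ 2 * σ ^ 2 / 2 = t ^ 2 * (a * l) := by
                  rw [← hal]; ring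
                rw [this, hbdef]; ring
      _ = ENNReal.ofReal (Real.sqrt (π / b)) := by
          rw [← ofReal_integral_eq_lintegral_ofReal (integrable_exp_neg_mul_sq hb)
            (ae_of_all _ fun t => (Real.exp_pos _).le), integral_gaussian]
      _ = K * ENNReal.ofReal (1 / Real.sqrt (1 - l)) := by
          rw [hK, ← ENNReal.ofReal_mul (Real.sqrt_nonneg _)]
          congr 1
          have h1 : π / b = (π / a) * (1 - l)⁻¹ := by
            rw [hbdef]; field_simp
          rw [h1, Real.sqrt_mul (by positivity) _, Real.sqrt_inv, one_div]
  exact (ENNReal.mul_le_mul_iff_right hK0 hKtop).mp hchain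

/-- If under `Q` the identity centered at `m` is `σ`-subgaussian, then for every
probability measure `P ≪ Q` and every `λ ∈ [0,1)`,
`D_KL(P ‖ Q) ≥ (λ/(2σ²)) ∫ (x-m)² dP - ln (1/√(1-λ))`. -/
theorem klDiv_ge_second_moment {m σ : ℝ}
    (Q : Measure ℝ) [IsProbabilityMeasure Q]
    (hsub : ∀ l : ℝ,
      ∫⁻ x, ENNReal.ofReal (Real.exp (l * (x - m))) ∂Q ≤
        ENNReal.ofReal (Real.exp (l ^ 2 * σ ^ 2 / 2)))
    (P : Measure ℝ) [IsProbabilityMeasure P] (hPQ : P ≪ Q) :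
    ∀ l : ℝ, 0 ≤ l → l < 1 →
      ((l / (2 * σ ^ 2) * ∫ x, (x - m) ^ 2 ∂P - Real.log (1 / Real.sqrt (1 - l)) : ℝ) : EReal)
        ≤ klDiv P Q := by
  intro l hl0 hl1
  have hsq1 : Real.sqrt (1 - l) ≤ 1 := by
    calc Real.sqrt (1 - l) ≤ Real.sqrt 1 := Real.sqrt_le_sqrt (by linarith)
      _ = 1 := Real.sqrt_one
  have hsqpos : 0 < Real.sqrt (1 - l) := Real.sqrt_pos.mpr (by linarith)
  have hlog0 : 0 ≤ Real.log (1 / Real.sqrt (1 - l)) := by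
    apply Real.log_nonneg
    rw [le_div_iff₀ hsqpos, one_mul]
    exact hsq1
  have hdv0 : (0 : EReal) ≤ klDiv P Q := by
    have h := aux_dv hPQ (f := fun _ : ℝ => (0:ℝ))
      (by simpa using (integrable_const (1:ℝ) : Integrable (fun _ : ℝ => (1:ℝ)) Q))
      (integrable_const 0)
    simpa using h
  -- degenerate cases reduce to `0 ≤ klDiv`
  have hdegen : ∀ r : ℝ, r ≤ 0 → ((r : ℝ) : EReal) ≤ klDiv P Q := by
    intro r hr
    refine le_trans ?_ hdv0
    exact_mod_cast hr
  by_cases hσ : σ = 0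
  · refine hdegen _ ?_
    rw [hσ]
    norm_num
    exact Real.log_nonpos (Real.sqrt_nonneg _) hsq1
  by_cases hl : l = 0
  · refine hdegen _ ?_
    rw [hl]
    norm_num
  have hpos : 0 < l := lt_of_le_of_ne hl0 (Ne.symm hl)
  by_cases hP2 : Integrable (fun x : ℝ => (x - m) ^ 2) P
  swap
  · refine hdegen _ ?_
    rw [integral_undef hP2]
    simpa using hlog0
  -- main case
  set f : ℝ → ℝ := fun x => l / (2 * σ ^ 2) * (x - m) ^ 2 with hfdef
  have hZ' := aux_gauss_bound Q hσ hsub hpos hl1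
  have hfQ : Integrable (fun x => Real.exp (f x)) Q := by
    constructor
    · exact (Continuous.aestronglyMeasurable (by fun_prop))
    · rw [hasFiniteIntegral_iff_ofReal (ae_of_all _ fun x => (Real.exp_pos _).le)]
      exact lt_of_le_of_lt hZ' ENNReal.ofReal_lt_top
  have hfP : Integrable f P := hP2.const_mul _
  have hdv := aux_dv hPQ hfQ hfP
  have hZle : ∫ x, Real.exp (f x) ∂Q ≤ 1 / Real.sqrt (1 - l) := by
    have h1 := ofReal_integral_eq_lintegral_ofReal hfQ
      (ae_of_all _ fun x => (Real.exp_pos _).le)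
    have h2 : ENNReal.ofReal (∫ x, Real.exp (f x) ∂Q)
        ≤ ENNReal.ofReal (1 / Real.sqrt (1 - l)) := h1 ▸ hZ'
    exact (ENNReal.ofReal_le_ofReal_iff (by positivity)).mp h2
  have hlogle : Real.log (∫ x, Real.exp (f x) ∂Q) ≤ Real.log (1 / Real.sqrt (1 - l)) :=
    Real.log_le_log (integral_exp_pos hfQ) hZle
  have hintf : ∫ x, f x ∂P = l / (2 * σ ^ 2) * ∫ x, (x - m) ^ 2 ∂P :=
    integral_const_mul _ _
  refine le_trans ?_ hdv
  rw [EReal.coe_le_coe_iff]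
  rw [hintf]
  linarith
end

section
/- Let 𝒳 and Θ be measurable spaces, let ν be a probability measure on 𝒳, and let φ: Θ × 𝒳 → ℝ and m: Θ → ℝ be measurable maps such that for every θ ∈ Θ, the function x ↦ φ(θ, x) has mean m(θ) under ν and φ(θ, ·) − m(θ) is σ-subgaussian under ν. Let (T, X) be a pair of random variables with values in Θ × 𝒳 such that the marginal law of X is ν, and suppose the mutual information bound D_KL(law(T, X) ‖ law(T) ⊗ ν) ≤ B holds for some B ≥ 0. Then E[(φ(T, X) − m(T))²] ≤ σ² · inf over λ ∈ (0,1) of (2B − ln(1 − λ))/λ. -/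
open MeasureTheory Real Classical

lemma gauss_mix (a c : ℝ) (ha : 0 < a) :
    ∫ s : ℝ, Real.exp (s * c - a * s ^ 2) = Real.sqrt (π / a) * Real.exp (c ^ 2 / (4 * a)) := by
  have key : ∀ s : ℝ, s * c - a * s ^ 2 = -a * (s - c / (2 * a)) ^ 2 + c ^ 2 / (4 * a) := by
    intro s; field_simp; ring
  simp_rw [key, Real.exp_add]
  rw [integral_mul_const]
  congr 1
  rw [integral_sub_right_eq_self (fun s => Real.exp (-a * s ^ 2)) (c / (2 * a))]
  exact integral_gaussian a

lemma gauss_integrable (a c : ℝ) (ha : 0 < a) :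
    Integrable (fun s : ℝ => Real.exp (s * c - a * s ^ 2)) := by
  have key : ∀ s : ℝ, s * c - a * s ^ 2 = -a * (s - c / (2 * a)) ^ 2 + c ^ 2 / (4 * a) := by
    intro s; field_simp; ring
  simp_rw [key, Real.exp_add]
  exact ((integrable_exp_neg_mul_sq ha).comp_sub_right (c / (2 * a))).mul_const _

lemma chisq_bound {𝒳 : Type*} [MeasurableSpace 𝒳] (ν : Measure 𝒳) [IsProbabilityMeasure ν]
    (g : 𝒳 → ℝ) (hg : Measurable g) (σ t : ℝ) (ht : 0 < t) (h1 : 2 * t * σ ^ 2 < 1)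
    (hsub : ∀ l : ℝ, ∫⁻ x, ENNReal.ofReal (Real.exp (l * g x)) ∂ν ≤
        ENNReal.ofReal (Real.exp (l ^ 2 * σ ^ 2 / 2))) :
    ∫⁻ x, ENNReal.ofReal (Real.exp (t * g x ^ 2)) ∂ν ≤
      ENNReal.ofReal (1 / Real.sqrt (1 - 2 * t * σ ^ 2)) := by
  set a : ℝ := 1 / (4 * t) with ha_def
  have ha : 0 < a := by positivity
  set b : ℝ := a - σ ^ 2 / 2 with hb_def
  have hb : 0 < b := by
    rw [hb_def, ha_def]
    rw [sub_pos, div_lt_div_iff₀ (by norm_num) (by positivity)]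
    nlinarith
  -- pointwise identity
  have hpt : ∀ x, ENNReal.ofReal (Real.exp (t * g x ^ 2)) =
      ENNReal.ofReal (Real.sqrt (a / π)) *
        ∫⁻ s : ℝ, ENNReal.ofReal (Real.exp (s * g x - a * s ^ 2)) := by
    intro x
    rw [← ofReal_integral_eq_lintegral_ofReal (gauss_integrable a (g x) ha)
      (Filter.Eventually.of_forall fun s => (Real.exp_pos _).le)]
    rw [gauss_mix a (g x) ha, ← ENNReal.ofReal_mul (Real.sqrt_nonneg _)]
    congr 1
    rw [← mul_assoc, ← Real.sqrt_mul (by positivity)]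
    have hπ : (0:ℝ) < π := Real.pi_pos
    rw [div_mul_div_comm, mul_comm a π, div_self (by positivity), Real.sqrt_one, one_mul]
    congr 1
    rw [ha_def]; field_simp
  simp_rw [hpt]
  rw [lintegral_const_mul' _ _ ENNReal.ofReal_ne_top]
  -- swap integrals
  have hmeas : AEMeasurable (Function.uncurry fun (x : 𝒳) (s : ℝ) =>
      ENNReal.ofReal (Real.exp (s * g x - a * s ^ 2))) (ν.prod volume) := by
    apply Measurable.aemeasurable
    apply Measurable.ennreal_ofReal
    apply Measurable.exp
    exact (measurable_snd.mul (hg.comp measurable_fst)).sub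
      ((measurable_snd.pow_const 2).const_mul a)
  rw [lintegral_lintegral_swap hmeas]
  -- bound the inner integral
  have hinner : ∀ s : ℝ, ∫⁻ x, ENNReal.ofReal (Real.exp (s * g x - a * s ^ 2)) ∂ν ≤
      ENNReal.ofReal (Real.exp (-b * s ^ 2)) := by
    intro s
    have : ∀ x, ENNReal.ofReal (Real.exp (s * g x - a * s ^ 2)) =
        ENNReal.ofReal (Real.exp (s * g x)) * ENNReal.ofReal (Real.exp (-(a * s ^ 2))) := by
      intro x
      rw [← ENNReal.ofReal_mul (Real.exp_pos _).le, ← Real.exp_add]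
      ring_nf
    simp_rw [this]
    rw [lintegral_mul_const' _ _ ENNReal.ofReal_ne_top]
    calc (∫⁻ x, ENNReal.ofReal (Real.exp (s * g x)) ∂ν) * ENNReal.ofReal (Real.exp (-(a * s ^ 2)))
        ≤ ENNReal.ofReal (Real.exp (s ^ 2 * σ ^ 2 / 2)) * ENNReal.ofReal (Real.exp (-(a * s ^ 2))) :=
          mul_le_mul_left (hsub s) _
      _ = ENNReal.ofReal (Real.exp (-b * s ^ 2)) := by
          rw [← ENNReal.ofReal_mul (Real.exp_pos _).le, ← Real.exp_add]
          congr 2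
          rw [hb_def]; ring
  calc ENNReal.ofReal (Real.sqrt (a / π)) *
        ∫⁻ s : ℝ, ∫⁻ x, ENNReal.ofReal (Real.exp (s * g x - a * s ^ 2)) ∂ν
      ≤ ENNReal.ofReal (Real.sqrt (a / π)) *
          ∫⁻ s : ℝ, ENNReal.ofReal (Real.exp (-b * s ^ 2)) :=
        mul_le_mul_right (lintegral_mono hinner) _
    _ = ENNReal.ofReal (1 / Real.sqrt (1 - 2 * t * σ ^ 2)) := by
        rw [← ofReal_integral_eq_lintegral_ofReal (integrable_exp_neg_mul_sq hb)
          (Filter.Eventually.of_forall fun s => (Real.exp_pos _).le)]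
        rw [integral_gaussian b, ← ENNReal.ofReal_mul (Real.sqrt_nonneg _)]
        congr 1
        have h2 : (0:ℝ) < 1 - 2 * t * σ ^ 2 := by linarith
        rw [← Real.sqrt_mul (by positivity)]
        have hab : a / π * (π / b) = 1 / (1 - 2 * t * σ ^ 2) := by
          have hπ : (0:ℝ) < π := Real.pi_pos
          rw [div_mul_div_comm, mul_comm a π, mul_div_mul_left _ _ hπ.ne']
          rw [div_eq_div_iff hb.ne' h2.ne', one_mul, hb_def, ha_def]
          field_simp
          ring
        rw [hab, one_div, Real.sqrt_inv, ← one_div]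

lemma dv_bound {α : Type*} [MeasurableSpace α] (P Q : Measure α)
    [IsProbabilityMeasure P] [IsProbabilityMeasure Q]
    (hac : P ≪ Q)
    (hL : Integrable (fun x => Real.log (P.rnDeriv Q x).toReal) P)
    (f : α → ℝ) (hf : Measurable f) (hfi : Integrable f P)
    (C : ℝ) (hC : 0 < C)
    (hbound : ∫⁻ x, ENNReal.ofReal (Real.exp (f x)) ∂Q ≤ ENNReal.ofReal C) :
    ∫ x, f x ∂P ≤ (∫ x, Real.log (P.rnDeriv Q x).toReal ∂P) + Real.log C := by
  set L : α → ℝ := fun x => Real.log (P.rnDeriv Q x).toReal with hL_def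
  set u : α → ℝ := fun x => f x - L x - Real.log C with hu_def
  set v : α → ℝ := fun x => Real.exp (f x) / ((P.rnDeriv Q x).toReal * C) with hv_def
  have hui : Integrable u P := (hfi.sub hL).sub (integrable_const _)
  -- pointwise bound a.e. P
  have hpos : ∀ᵐ x ∂P, 0 < P.rnDeriv Q x := Measure.rnDeriv_pos hac
  have hlt : ∀ᵐ x ∂P, P.rnDeriv Q x < ⊤ := hac.ae_le (Measure.rnDeriv_lt_top P Q)
  have hptw : ∀ᵐ x ∂P, u x + 1 ≤ v x := by
    filter_upwards [hpos, hlt] with x hx hx'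
    have hρ : 0 < (P.rnDeriv Q x).toReal := ENNReal.toReal_pos hx.ne' hx'.ne
    have : Real.exp (u x) = v x := by
      rw [hu_def, hv_def]
      simp only [hL_def, Real.exp_sub, Real.exp_log hρ, Real.exp_log hC, div_div]
    rw [← this]
    exact Real.add_one_le_exp _
  -- lintegral of v under P is at most 1
  have hvm : Measurable v := by
    apply Measurable.div hf.exp
    exact ((Measure.measurable_rnDeriv P Q).ennreal_toReal).mul_const C
  have hv1 : ∫⁻ x, ENNReal.ofReal (v x) ∂P ≤ 1 := by
    rw [← MeasureTheory.lintegral_rnDeriv_mul hac (hvm.ennreal_ofReal.aemeasurable)]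
    have hQlt : ∀ᵐ x ∂Q, P.rnDeriv Q x < ⊤ := Measure.rnDeriv_lt_top P Q
    have step : ∀ᵐ x ∂Q, P.rnDeriv Q x * ENNReal.ofReal (v x) ≤
        ENNReal.ofReal (Real.exp (f x)) * (ENNReal.ofReal C)⁻¹ := by
      filter_upwards [hQlt] with x hx
      rcases eq_or_ne (P.rnDeriv Q x) 0 with h0 | h0
      · simp [h0]
      · have hρ : 0 < (P.rnDeriv Q x).toReal := ENNReal.toReal_pos h0 hx.ne
        have : P.rnDeriv Q x = ENNReal.ofReal ((P.rnDeriv Q x).toReal) := by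
          rw [ENNReal.ofReal_toReal hx.ne]
        rw [this, ← ENNReal.ofReal_mul hρ.le]
        have : (P.rnDeriv Q x).toReal * v x = Real.exp (f x) / C := by
          rw [hv_def]
          field_simp
        rw [this, ENNReal.ofReal_div_of_pos hC, div_eq_mul_inv]
    calc ∫⁻ x, P.rnDeriv Q x * ENNReal.ofReal (v x) ∂Q
        ≤ ∫⁻ x, ENNReal.ofReal (Real.exp (f x)) * (ENNReal.ofReal C)⁻¹ ∂Q :=
          lintegral_mono_ae step
      _ = (∫⁻ x, ENNReal.ofReal (Real.exp (f x)) ∂Q) * (ENNReal.ofReal C)⁻¹ :=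
          lintegral_mul_const' _ _ (by simp [ENNReal.ofReal_ne_top,
            ENNReal.inv_ne_top, ENNReal.ofReal_pos.mpr hC, (ENNReal.ofReal_pos.mpr hC).ne'])
      _ ≤ ENNReal.ofReal C * (ENNReal.ofReal C)⁻¹ := mul_le_mul_left hbound _
      _ = 1 := ENNReal.mul_inv_cancel (ENNReal.ofReal_pos.mpr hC).ne' ENNReal.ofReal_ne_top
  -- conclude ∫ u ≤ 0
  have hu0 : ∫ x, u x ∂P ≤ 0 := by
    have h1 : ∫ x, (u x + 1) ∂P = (∫ x, u x ∂P) + 1 := by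
      rw [integral_add hui (integrable_const _), integral_const]
      simp
    have h2 : ∫ x, (u x + 1) ∂P ≤ 1 := by
      have hint : Integrable (fun x => u x + 1) P := hui.add (integrable_const _)
      rw [integral_eq_lintegral_pos_part_sub_lintegral_neg_part hint]
      have h3 : (∫⁻ x, ENNReal.ofReal (u x + 1) ∂P) ≤ 1 := by
        refine le_trans (lintegral_mono_ae ?_) hv1
        filter_upwards [hptw] with x hx
        exact ENNReal.ofReal_le_ofReal hx
      have h4 : (∫⁻ x, ENNReal.ofReal (u x + 1) ∂P).toReal ≤ 1 :=
        ENNReal.toReal_le_of_le_ofReal zero_le_one (by simpa using h3)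
      have h5 : 0 ≤ (∫⁻ x, ENNReal.ofReal (-(u x + 1)) ∂P).toReal := ENNReal.toReal_nonneg
      linarith
    linarith [h1 ▸ h2]
  have hdecomp : ∫ x, u x ∂P = (∫ x, f x ∂P) - (∫ x, L x ∂P) - Real.log C := by
    rw [hu_def]
    simp only
    have e1 : Integrable (fun x => f x - L x) P := hfi.sub hL
    rw [integral_sub e1 (integrable_const _), integral_sub hfi hL, integral_const]
    simp
  linarith [hdecomp ▸ hu0]

/-- If every query `φ(θ, ·)` has mean `m θ` under `ν` and is `σ`-subgaussian,
`X` has law `ν`, and the mutual information between the selected query `T` and the data `X`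
is at most `B`, then `E[(φ(T, X) - m(T))²] ≤ σ² · inf_{λ ∈ (0,1)} (2B - ln(1-λ))/λ`. -/
theorem expected_sq_error_le_of_mutualInfo_le {𝒳 Θ : Type*}
    [MeasurableSpace 𝒳] [MeasurableSpace Θ]
    (ν : Measure 𝒳) [IsProbabilityMeasure ν]
    (φ : Θ → 𝒳 → ℝ) (hφ : Measurable (Function.uncurry φ))
    (m : Θ → ℝ) (hm : Measurable m) (σ : ℝ)
    (hmean : ∀ θ, ∫ x, φ θ x ∂ν = m θ)
    (hsub : ∀ θ, ∀ l : ℝ,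
      ∫⁻ x, ENNReal.ofReal (Real.exp (l * (φ θ x - m θ))) ∂ν ≤
        ENNReal.ofReal (Real.exp (l ^ 2 * σ ^ 2 / 2)))
    {Ω : Type*} [MeasurableSpace Ω] (P : Measure Ω) [IsProbabilityMeasure P]
    (T : Ω → Θ) (X : Ω → 𝒳) (hT : Measurable T) (hX : Measurable X)
    (hlaw : Measure.map X P = ν)
    (B : ℝ) (hB : 0 ≤ B)
    (hMI : klDiv (Measure.map (fun ω => (T ω, X ω)) P) ((Measure.map T P).prod ν)
      ≤ (B : EReal)) :
    ∫ ω, (φ (T ω) (X ω) - m (T ω)) ^ 2 ∂P ≤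
      σ ^ 2 * ⨅ l : Set.Ioo (0 : ℝ) 1, (2 * B - Real.log (1 - l.1)) / l.1 := by
  classical
  set μT : Measure Θ := Measure.map T P with hμT
  haveI : IsProbabilityMeasure μT := Measure.isProbabilityMeasure_map hT.aemeasurable
  set Q : Measure (Θ × 𝒳) := μT.prod ν with hQ
  set P' : Measure (Θ × 𝒳) := Measure.map (fun ω => (T ω, X ω)) P with hP'
  haveI : IsProbabilityMeasure P' := Measure.isProbabilityMeasure_map (hT.prodMk hX).aemeasurable
  haveI : IsProbabilityMeasure Q := by infer_instance
  -- extract KL data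
  by_cases hcond : P' ≪ Q ∧ Integrable (fun p => Real.log (P'.rnDeriv Q p).toReal) P'
  swap
  · rw [klDiv, if_neg hcond, top_le_iff] at hMI
    exact absurd hMI (EReal.coe_ne_top B)
  obtain ⟨hac, hLi⟩ := hcond
  have hKL : ∫ p, Real.log (P'.rnDeriv Q p).toReal ∂P' ≤ B := by
    rw [klDiv, if_pos ⟨hac, hLi⟩] at hMI
    exact_mod_cast hMI
  set F : Θ × 𝒳 → ℝ := fun p => (φ p.1 p.2 - m p.1) ^ 2 with hF
  have hFm : Measurable F := (hφ.sub (hm.comp measurable_fst)).pow_const 2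
  have hLHS : ∫ ω, (φ (T ω) (X ω) - m (T ω)) ^ 2 ∂P = ∫ p, F p ∂P' :=
    (integral_map (hT.prodMk hX).aemeasurable hFm.aestronglyMeasurable).symm
  rw [hLHS]
  -- key estimate via DV
  have key : ∀ t : ℝ, 0 < t → 2 * t * σ ^ 2 < 1 → Integrable F P' →
      ∫ p, F p ∂P' ≤ (B - Real.log (1 - 2 * t * σ ^ 2) / 2) / t := by
    intro t ht h1 hFi
    have h2 : (0:ℝ) < 1 - 2 * t * σ ^ 2 := by linarith
    have hC : (0:ℝ) < 1 / Real.sqrt (1 - 2 * t * σ ^ 2) := by positivity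
    have hbound : ∫⁻ p, ENNReal.ofReal (Real.exp (t * F p)) ∂Q ≤
        ENNReal.ofReal (1 / Real.sqrt (1 - 2 * t * σ ^ 2)) := by
      have hmeas : AEMeasurable (fun p : Θ × 𝒳 => ENNReal.ofReal (Real.exp (t * F p))) Q :=
        ((hFm.const_mul t).exp.ennreal_ofReal).aemeasurable
      rw [hQ, lintegral_prod _ hmeas]
      have hinner : ∀ θ, ∫⁻ x, ENNReal.ofReal (Real.exp (t * F (θ, x))) ∂ν ≤
          ENNReal.ofReal (1 / Real.sqrt (1 - 2 * t * σ ^ 2)) := by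
        intro θ
        exact chisq_bound ν (fun x => φ θ x - m θ)
          ((hφ.comp measurable_prodMk_left).sub measurable_const) σ t ht h1 (hsub θ)
      calc ∫⁻ θ, ∫⁻ x, ENNReal.ofReal (Real.exp (t * F (θ, x))) ∂ν ∂μT
          ≤ ∫⁻ _, ENNReal.ofReal (1 / Real.sqrt (1 - 2 * t * σ ^ 2)) ∂μT :=
            lintegral_mono hinner
        _ = ENNReal.ofReal (1 / Real.sqrt (1 - 2 * t * σ ^ 2)) := by
            simp [lintegral_const]
    have hdv := dv_bound P' Q hac hLi (fun p => t * F p) (hFm.const_mul t)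
      (hFi.const_mul t) _ hC hbound
    rw [MeasureTheory.integral_const_mul] at hdv
    have hlog : Real.log (1 / Real.sqrt (1 - 2 * t * σ ^ 2)) =
        -(Real.log (1 - 2 * t * σ ^ 2) / 2) := by
      rw [one_div, Real.log_inv, Real.log_sqrt h2.le]
    rw [le_div_iff₀ ht, mul_comm]
    calc t * ∫ p, F p ∂P' ≤
        (∫ p, Real.log (P'.rnDeriv Q p).toReal ∂P') + Real.log (1 / Real.sqrt (1 - 2 * t * σ ^ 2)) := hdv
      _ ≤ B - Real.log (1 - 2 * t * σ ^ 2) / 2 := by rw [hlog]; linarith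
  -- per-lambda bound
  have main : ∀ l : ℝ, l ∈ Set.Ioo (0:ℝ) 1 →
      ∫ p, F p ∂P' ≤ σ ^ 2 * ((2 * B - Real.log (1 - l)) / l) := by
    rintro l ⟨hl0, hl1⟩
    by_cases hFi : Integrable F P'
    · rcases eq_or_lt_of_le (sq_nonneg σ) with hσ | hσ
      · -- σ² = 0
        have h0 : ∫ p, F p ∂P' ≤ 0 := by
          by_contra hcon
          push_neg at hcon
          set I := ∫ p, F p ∂P' with hI
          have htpos : 0 < (B + 1) / I := by positivity
          have hkey := key ((B + 1) / I) htpos (by rw [← hσ]; norm_num) hFi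
          rw [← hσ] at hkey
          simp only [mul_zero, sub_zero, Real.log_one, zero_div] at hkey
          rw [div_div_eq_mul_div, le_div_iff₀ (by linarith : (0:ℝ) < B + 1)] at hkey
          nlinarith
        calc ∫ p, F p ∂P' ≤ 0 := h0
          _ ≤ σ ^ 2 * ((2 * B - Real.log (1 - l)) / l) := by rw [← hσ]; simp
      · set t : ℝ := l / (2 * σ ^ 2) with htd
        have ht : 0 < t := by positivity
        have h2t : 2 * t * σ ^ 2 = l := by
          rw [htd, mul_comm 2 (l / (2 * σ ^ 2)), mul_assoc, div_mul_cancel₀ l (mul_pos two_pos hσ).ne']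
        have hkey := key t ht (by rw [h2t]; exact hl1) hFi
        rw [h2t] at hkey
        refine hkey.trans (le_of_eq ?_)
        rw [htd]
        field_simp
    · rw [integral_undef hFi]
      have hlog : Real.log (1 - l) ≤ 0 := Real.log_nonpos (by linarith) (by linarith)
      have : 0 ≤ (2 * B - Real.log (1 - l)) / l := div_nonneg (by linarith) hl0.le
      exact mul_nonneg (sq_nonneg σ) this
  -- conclude
  haveI : Nonempty ↥(Set.Ioo (0:ℝ) 1) := ⟨⟨1/2, by norm_num⟩⟩
  rcases eq_or_lt_of_le (sq_nonneg σ) with hσ | hσ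
  · have h12 := main (1/2) (by norm_num)
    rw [← hσ, zero_mul] at h12 ⊢
    exact h12
  · have step : ∀ l : Set.Ioo (0:ℝ) 1,
        (∫ p, F p ∂P') / σ ^ 2 ≤ (2 * B - Real.log (1 - l.1)) / l.1 := by
      intro l
      rw [div_le_iff₀ hσ]
      rw [mul_comm]
      exact main l.1 l.2
    have hinf := le_ciInf step
    rw [div_le_iff₀ hσ] at hinf
    rw [mul_comm] at hinf
    exact hinf
end
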